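/- Let 0 < D ≤ D̃ ≤ c. Then c·log(1 + (D̃ − D)/(D + c)) + D̃·log(1 + c/D̃) − D·log(1 + c/D) ≥ (D̃ − D)/2. -/

import Mathlib

/-- Concavity of `log`: for `0 ≤ u ≤ v`, `u·log(1+v) ≤ v·log(1+u)`. -/
lemma aux_ulog (u v : ℝ) (hu : 0 ≤ u) (huv : u ≤ v) :
    u * Real.log (1 + v) ≤ v * Real.log (1 + u) := by
  rcases eq_or_lt_of_le hu with h | hu0
  · simp [← h]
  have hv : 0 < v := lt_of_lt_of_le hu0 huv
  have hconc := strictConcaveOn_log_Ioi.concaveOn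
  have h1 : (1:ℝ) ∈ Set.Ioi (0:ℝ) := by norm_num
  have h2 : (1+v) ∈ Set.Ioi (0:ℝ) := by simp; linarith
  have ha : 0 ≤ 1 - u/v := by
    have : u/v ≤ 1 := by rw [div_le_one hv]; exact huv
    linarith
  have hb : 0 ≤ u/v := by positivity
  have hab : (1 - u/v) + u/v = 1 := by ring
  have hkey := hconc.2 h1 h2 ha hb hab
  have hx : (1 - u/v) • (1:ℝ) + (u/v) • (1+v) = 1 + u := by
    field_simp
    simp only [smul_eq_mul, mul_one]
    rw [div_mul_eq_mul_div, ← add_div, div_eq_iff hv.ne']; ring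
  rw [hx] at hkey
  simp only [smul_eq_mul, Real.log_one, mul_zero, zero_add] at hkey
  have := mul_le_mul_of_nonneg_left hkey (le_of_lt hv)
  calc u * Real.log (1+v) = v * (u/v * Real.log (1+v)) := by field_simp
    _ ≤ v * Real.log (1+u) := this

/-- Monotonicity of `x ↦ x·log((x+a)/x)` for `a ≥ 0`. -/
lemma aux_mono (x y a : ℝ) (hx : 0 < x) (hxy : x ≤ y) (ha : 0 ≤ a) :
    x * Real.log ((x+a)/x) ≤ y * Real.log ((y+a)/y) := by
  have hy : 0 < y := lt_of_lt_of_le hx hxy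
  rcases eq_or_lt_of_le ha with h | ha0
  · simp [← h, div_self hx.ne', div_self hy.ne']
  have h1 : a/y ≤ a/x := div_le_div_of_nonneg_left (le_of_lt ha0) hx hxy
  have h2 : 0 ≤ a/y := by positivity
  have hkey := aux_ulog (a/y) (a/x) h2 h1
  have e1 : (1:ℝ) + a/x = (x+a)/x := by field_simp
  have e2 : (1:ℝ) + a/y = (y+a)/y := by field_simp
  rw [e1, e2] at hkey
  have hfac : (0:ℝ) ≤ x*y/a := by positivity
  have := mul_le_mul_of_nonneg_left hkey hfac
  calc x * Real.log ((x+a)/x) = x*y/a * (a/y * Real.log ((x+a)/x)) := by field_simp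
    _ ≤ x*y/a * (a/x * Real.log ((y+a)/y)) := this
    _ = y * Real.log ((y+a)/y) := by field_simp

/-- Chain of estimates in the proof of Theorem 5 (regret transfer bound) for the logistic
loss, case `0 < D ≤ Dt ≤ c`: the excess conditional surrogate risk is at least half the
pointwise target regret `Dt − D`:
`c·log(1 + (Dt − D)/(D + c)) + Dt·log(1 + c/Dt) − D·log(1 + c/D) ≥ (Dt − D)/2`. -/
theorem logistic_regret_transfer_case (D Dt c : ℝ) (hD : 0 < D) (hDDt : D ≤ Dt)
    (hDtc : Dt ≤ c) :
    (Dt - D) / 2 ≤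
      c * Real.log (1 + (Dt - D) / (D + c)) + Dt * Real.log (1 + c / Dt) -
        D * Real.log (1 + c / D) := by
  have hDt : 0 < Dt := lt_of_lt_of_le hD hDDt
  have hc : 0 < c := lt_of_lt_of_le hDt hDtc
  have hDc : 0 < D + c := by linarith
  have hDtc' : 0 < Dt + c := by linarith
  have e1 : 1 + (Dt - D) / (D + c) = (Dt + c) / (D + c) := by field_simp; ring
  have e2 : 1 + c / Dt = (Dt + c) / Dt := by field_simp
  have e3 : 1 + c / D = (D + c) / D := by field_simp
  rw [e1, e2, e3, Real.log_div (by positivity) (by positivity),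
    Real.log_div (by positivity) (by positivity),
    Real.log_div (by positivity) (by positivity)]
  -- key inequality A : D·log(Dt/D) ≤ (D+c)·log((Dt+c)/(D+c))
  have hA := aux_mono D (D+c) (Dt - D) hD (by linarith) (by linarith)
  have eA1 : D + (Dt - D) = Dt := by ring
  have eA2 : D + c + (Dt - D) = Dt + c := by ring
  rw [eA1, eA2, Real.log_div (by positivity) (by positivity),
    Real.log_div (by positivity) (by positivity)] at hA
  -- key inequality B : 1/2 ≤ log(Dt+c) − log Dt
  have h2le : (2:ℝ) ≤ (Dt + c) / Dt := by
    rw [le_div_iff₀ hDt]; linarith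
  have hlog2 : (1:ℝ)/2 ≤ Real.log 2 := by
    have := Real.log_two_gt_d9
    linarith
  have hBkey : (1:ℝ)/2 ≤ Real.log (Dt + c) - Real.log Dt := by
    have := Real.log_le_log (by norm_num : (0:ℝ) < 2) h2le
    rw [Real.log_div (by positivity) (by positivity)] at this
    linarith
  nlinarith [mul_le_mul_of_nonneg_left hBkey (by linarith : (0:ℝ) ≤ Dt - D)]
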